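/- Let 𝔊 = (G = (V,E), ◇T, ψ_pers(Λ)) be a reachability game augmented with persistent live groups, let (S, C, R) ∈ Λ, and let A ⊆ V be a set of vertices each of which is winning for Player 0 in 𝔊. Let B be the winning region of Player 0 in the (non-augmented) game (G|_C, ◇A ∨ □(S∖R)). Then every vertex of B is winning for Player 0 in 𝔊. -/

import Mathlib

universe u

/-- A two-player game graph: finite-intended vertex set `V`, an ownership function
(`owner v = 0` means `v` is a Player-0 vertex, `owner v = 1` a Player-1 vertex),
and an edge relation such that every vertex has at least one outgoing edge. -/
structure GameGraph (V : Type u) where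
  owner : V → Fin 2
  E : V → V → Prop
  exists_succ : ∀ v, ∃ w, E v w

variable {V : Type u}

/-- A play of the game graph: an infinite sequence of vertices following edges. -/
def IsPlay (G : GameGraph V) (ρ : ℕ → V) : Prop :=
  ∀ k, G.E (ρ k) (ρ (k + 1))

/-- A (history-dependent) strategy: given the list of previously visited
vertices and the current vertex, it chooses a next vertex. -/
abbrev Strategy (V : Type u) := List V → V → V

/-- A strategy of Player `i` is valid if at each Player-`i` vertex it chooses
an edge of the game graph. -/
def StratValid (G : GameGraph V) (i : Fin 2) (σ : Strategy V) : Prop :=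
  ∀ (h : List V) (v : V), G.owner v = i → G.E v (σ h v)

/-- A positional (memoryless) strategy ignores the history. -/
def Positional (σ : Strategy V) : Prop :=
  ∀ (h h' : List V) (v : V), σ h v = σ h' v

/-- A play is compliant with the strategy `σ` of Player `i` (a `σ`-play) if at
every Player-`i` vertex it moves to the vertex chosen by `σ`. -/
def Compliant (G : GameGraph V) (i : Fin 2) (σ : Strategy V) (ρ : ℕ → V) : Prop :=
  ∀ k, G.owner (ρ k) = i → ρ (k + 1) = σ (List.ofFn fun j : Fin k => ρ j.val) (ρ k)

/-- `σ` is a winning strategy for Player `i` from `v`, where `W` is the set of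
plays that are winning for Player `i`. -/
def WinsFrom (G : GameGraph V) (i : Fin 2) (W : Set (ℕ → V)) (σ : Strategy V) (v : V) : Prop :=
  StratValid G i σ ∧
    ∀ ρ : ℕ → V, IsPlay G ρ → Compliant G i σ ρ → ρ 0 = v → ρ ∈ W

/-- The winning region of Player `i`: the vertices from which Player `i` has a
winning strategy. -/
def WinRegion (G : GameGraph V) (i : Fin 2) (W : Set (ℕ → V)) : Set V :=
  {v | ∃ σ, WinsFrom G i W σ v}

/-- A vertex occurs infinitely often along a play. -/
def InfOft (ρ : ℕ → V) (v : V) : Prop := ∀ n, ∃ k, n ≤ k ∧ ρ k = v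

/-- An edge is taken infinitely often along a play. -/
def EdgeInfOft (ρ : ℕ → V) (e : V × V) : Prop :=
  ∀ n, ∃ k, n ≤ k ∧ ρ k = e.1 ∧ ρ (k + 1) = e.2

/-- Parity objective: the maximal priority occurring infinitely often is even. -/
def ParityWin (P : V → ℕ) (ρ : ℕ → V) : Prop :=
  ∃ v, InfOft ρ v ∧ Even (P v) ∧ ∀ w, InfOft ρ w → P w ≤ P v

/-- The set of source vertices of a set of edges. -/
def srcSet (H : Set (V × V)) : Set V := {u | ∃ w, (u, w) ∈ H}

/-- A persistent live group: a triple `(S, C, R)` of a source region `S`, a set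
`C` of (Player-0-sourced) edges, and a target region `R ⊆ S`. -/
abbrev PersGroup (V : Type u) := Set V × Set (V × V) × Set V

/-- Well-formedness of a persistent live group `(S, C, R)` over `G`:
`R ⊆ S ⊆ V` and `C ⊆ E` consists of edges with Player-0 sources. -/
def persWF (G : GameGraph V) (g : PersGroup V) : Prop :=
  g.2.2 ⊆ g.1 ∧ ∀ e ∈ g.2.1, G.E e.1 e.2 ∧ G.owner e.1 = 0

/-- A play satisfies `ψ_pers(S, C, R)` iff for every position `n`: if from `n`
on the play stays in `S` and always takes an edge of `C` whenever it is at a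
source of `C`, then the play visits `R` at some position `≥ n`. -/
def psiPersOne (S : Set V) (C : Set (V × V)) (R : Set V) (ρ : ℕ → V) : Prop :=
  ∀ n : ℕ,
    (∀ m2, n ≤ m2 → ρ m2 ∈ S ∧ (ρ m2 ∈ srcSet C → (ρ m2, ρ (m2 + 1)) ∈ C)) →
      ∃ m2, n ≤ m2 ∧ ρ m2 ∈ R

/-- The assumption `ψ_pers(Λ)` induced by a set `Λ` of persistent live groups. -/
def psiPers (Λ : Set (PersGroup V)) (ρ : ℕ → V) : Prop :=
  ∀ g ∈ Λ, psiPersOne g.1 g.2.1 g.2.2 ρ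

/-- `σ` is a winning strategy for Player `i` from `v` in the game over the edge
relation `Erel` (with the given ownership function), where `W` is the set of
plays winning for Player `i`. -/
def WinsFromRel (Erel : V → V → Prop) (owner : V → Fin 2) (i : Fin 2)
    (W : Set (ℕ → V)) (σ : Strategy V) (v : V) : Prop :=
  (∀ (h : List V) (u : V), owner u = i → Erel u (σ h u)) ∧
    ∀ ρ : ℕ → V, (∀ n, Erel (ρ n) (ρ (n + 1))) →
      (∀ n, owner (ρ n) = i →
        ρ (n + 1) = σ (List.ofFn fun j : Fin n => ρ j.val) (ρ n)) →
      ρ 0 = v → ρ ∈ W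

/-- The winning region of Player `i` in the game over the edge relation `Erel`. -/
def WinRegionRel (Erel : V → V → Prop) (owner : V → Fin 2) (i : Fin 2)
    (W : Set (ℕ → V)) : Set V :=
  {v | ∃ σ, WinsFromRel Erel owner i W σ v}

/-- The edge relation of the restricted game graph `G|_C`: an edge `(u,v)` of
`E` is kept iff `(u,v) ∈ C` or `u` is not the source of any edge of `C`. -/
def ErestC (G : GameGraph V) (C : Set (V × V)) : V → V → Prop :=
  fun u v => G.E u v ∧ ((u, v) ∈ C ∨ u ∉ srcSet C)

open Classical in
/-- First index (and vertex) of an element of `A` in a list. -/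
noncomputable def firstA (A : Set V) : List V → Option (ℕ × V)
  | [] => none
  | x :: xs => if x ∈ A then some (0, x) else (firstA A xs).map (fun p => (p.1 + 1, p.2))

lemma firstA_none (A : Set V) : ∀ (l : List V), (∀ x ∈ l, x ∉ A) → firstA A l = none := by
  intro l
  induction l with
  | nil => intro _; rfl
  | cons x xs ih =>
    intro h
    rw [firstA, if_neg (h x (List.mem_cons_self)), ih (fun y hy => h y (List.mem_cons_of_mem _ hy))]
    rfl

lemma firstA_some (A : Set V) : ∀ (l : List V) (k : ℕ) (hk : k < l.length),
    (∀ j (hj : j < l.length), j < k → l[j] ∉ A) → l[k] ∈ A →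
    firstA A l = some (k, l[k]) := by
  intro l
  induction l with
  | nil => intro k hk; simp at hk
  | cons x xs ih =>
    intro k hk h1 h2
    match k with
    | 0 =>
      rw [firstA, if_pos (by simpa using h2)]
      simp
    | k + 1 =>
      have hx : x ∉ A := by
        have := h1 0 (by simp) (Nat.succ_pos _)
        simpa using this
      rw [firstA, if_neg hx,
        ih k (by simpa using hk)
          (fun j hj hjk => by
            have := h1 (j + 1) (by simpa using Nat.succ_lt_succ hj) (Nat.succ_lt_succ hjk)
            simpa using this)
          (by simpa using h2)]
      rfl

lemma firstA_mem (A : Set V) : ∀ (l : List V) (k : ℕ) (a : V),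
    firstA A l = some (k, a) → a ∈ A := by
  intro l
  induction l with
  | nil => intro k a h; simp [firstA] at h
  | cons x xs ih =>
    intro k a h
    rw [firstA] at h
    by_cases hx : x ∈ A
    · rw [if_pos hx] at h
      obtain ⟨h1, h2⟩ := Prod.mk.injEq _ _ _ _ ▸ Option.some.injEq _ _ ▸ h
      cases h; exact hx
    · rw [if_neg hx] at h
      match heq : firstA A xs with
      | none => rw [heq] at h; simp at h
      | some (k', a') =>
        rw [heq] at h
        simp only [Option.map_some, Option.some.injEq, Prod.mk.injEq] at h
        exact h.2 ▸ ih k' a' heq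

lemma ofFn_drop (f : ℕ → V) (k m : ℕ) :
    (List.ofFn fun j : Fin (k + m) => f j.val).drop k
      = List.ofFn fun j : Fin m => f (k + j.val) := by
  apply List.ext_getElem
  · simp
  · intro i h1 h2
    simp [List.getElem_drop]

open Classical in
/-- Strategy: play `σ` until first visiting `A`, then switch to `F a` where
`a` is the first visited vertex of `A`. -/
noncomputable def switchStrat (A : Set V) (F : V → Strategy V) (σ : Strategy V) : Strategy V :=
  fun h u =>
    match firstA A h with
    | some (k, a) => F a (h.drop k) u
    | none => if u ∈ A then F u [] u else σ h u

lemma psiPers_shift (Λ : Set (PersGroup V)) (ρ : ℕ → V) (n₀ : ℕ)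
    (h : psiPers Λ ρ) : psiPers Λ (fun m => ρ (n₀ + m)) := by
  intro g hg n hn
  obtain ⟨m2, hm2, hR⟩ := h g hg (n₀ + n) (by
    intro m2 hm2
    have h1 := hn (m2 - n₀) (by omega)
    have e1 : n₀ + (m2 - n₀) = m2 := by omega
    have e2 : n₀ + (m2 - n₀ + 1) = m2 + 1 := by omega
    simp only [e1, e2] at h1
    exact h1)
  refine ⟨m2 - n₀, by omega, ?_⟩
  have e1 : n₀ + (m2 - n₀) = m2 := by omega
  simp only [e1]
  exact hR

/-- Let `𝔊 = (G, ◇T, ψ_pers(Λ))` be a reachability game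
augmented with persistent live groups, let `(S, C, R) ∈ Λ`, and let `A ⊆ V` be
a set of vertices each of which is winning for Player 0 in `𝔊`.  Let `B` be
the winning region of Player 0 in the non-augmented game
`(G|_C, ◇A ∨ □(S∖R))`.  Then every vertex of `B` is winning for Player 0 in
`𝔊`. -/
theorem stmt14 (V : Type) [Fintype V] (G : GameGraph V)
    (T : Set V) (Λ : Set (PersGroup V)) (hΛ : ∀ g ∈ Λ, persWF G g)
    (S : Set V) (C : Set (V × V)) (R : Set V) (hmem : (S, C, R) ∈ Λ)
    (A : Set V)
    (hA : ∀ v ∈ A, ∃ σ : Strategy V,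
      WinsFrom G 0 {ρ | psiPers Λ ρ → ∃ n, ρ n ∈ T} σ v) :
    ∀ v ∈ WinRegionRel (ErestC G C) G.owner 0
        {ρ | (∃ n, ρ n ∈ A) ∨ ∀ n, ρ n ∈ S \ R},
      ∃ σ : Strategy V, WinsFrom G 0 {ρ | psiPers Λ ρ → ∃ n, ρ n ∈ T} σ v := by
  classical
  intro v hv
  obtain ⟨σ, hσvalid, hσwin⟩ := hv
  -- sources of C are Player-0 vertices
  have hsrc : ∀ u ∈ srcSet C, G.owner u = 0 := by
    rintro u ⟨w, hw⟩
    exact ((hΛ (S, C, R) hmem).2 (u, w) hw).2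
  -- choose winning strategies from vertices of A (with a valid fallback)
  choose F0 hF0 using hA
  let F : V → Strategy V := fun a =>
    if ha : a ∈ A then F0 a ha else fun _ u => Classical.choose (G.exists_succ u)
  have hFvalid : ∀ a, StratValid G 0 (F a) := by
    intro a h u hu
    by_cases ha : a ∈ A
    · simp only [F, dif_pos ha]
      exact (hF0 a ha).1 h u hu
    · simp only [F, dif_neg ha]
      exact Classical.choose_spec (G.exists_succ u)
  have hFwin : ∀ a (ha : a ∈ A), ∀ ρ : ℕ → V, IsPlay G ρ → Compliant G 0 (F a) ρ →
      ρ 0 = a → psiPers Λ ρ → ∃ n, ρ n ∈ T := by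
    intro a ha ρ h1 h2 h3
    have h2' : Compliant G 0 (F0 a ha) ρ := by
      intro k hk
      have := h2 k hk
      simpa only [F, dif_pos ha] using this
    exact (hF0 a ha).2 ρ h1 h2' h3
  refine ⟨switchStrat A F σ, ?_, ?_⟩
  · -- validity
    intro h u hu
    unfold switchStrat
    match heq : firstA A h with
    | some (k, a) => exact hFvalid a (h.drop k) u hu
    | none =>
      by_cases hA' : u ∈ A
      · rw [if_pos hA']; exact hFvalid u [] u hu
      · rw [if_neg hA']; exact (hσvalid h u hu).1
  · -- winning
    intro ρ hplay hcomp hρ0 hψ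
    by_cases hAcase : ∃ n, ρ n ∈ A
    · -- switch to the winning strategy at the first visit of A
      set n₀ := Nat.find hAcase with hn₀def
      have haA : ρ n₀ ∈ A := Nat.find_spec hAcase
      have hmin : ∀ j, j < n₀ → ρ j ∉ A := fun j hj => Nat.find_min hAcase hj
      set ρ' : ℕ → V := fun m => ρ (n₀ + m) with hρ'def
      have hplay' : IsPlay G ρ' := fun m => hplay (n₀ + m)
      have hcomp' : Compliant G 0 (F (ρ n₀)) ρ' := by
        intro m hown
        have hc := hcomp (n₀ + m) hown
        have key : switchStrat A F σ (List.ofFn fun j : Fin (n₀ + m) => ρ j.val) (ρ (n₀ + m))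
            = F (ρ n₀) (List.ofFn fun j : Fin m => ρ' j.val) (ρ (n₀ + m)) := by
          match m with
          | 0 =>
            have hnone : firstA A (List.ofFn fun j : Fin (n₀ + 0) => ρ j.val) = none := by
              apply firstA_none
              intro x hx
              rw [List.mem_ofFn] at hx
              obtain ⟨j, hj⟩ := hx
              rw [← hj]
              exact hmin j.val (by omega)
            unfold switchStrat
            rw [hnone, if_pos (by simpa using haA)]
            simp [ρ']
          | m + 1 =>
            have hlen : n₀ < (List.ofFn fun j : Fin (n₀ + (m + 1)) => ρ j.val).length := by
              simp only [List.length_ofFn]; omega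
            have hsome : firstA A (List.ofFn fun j : Fin (n₀ + (m + 1)) => ρ j.val)
                = some (n₀, ρ n₀) := by
              have := firstA_some A (List.ofFn fun j : Fin (n₀ + (m + 1)) => ρ j.val) n₀ hlen
                (fun j hj hjk => by
                  rw [List.getElem_ofFn]
                  exact hmin j hjk)
                (by rw [List.getElem_ofFn]; exact haA)
              rw [this, List.getElem_ofFn]
            unfold switchStrat
            rw [hsome]
            show F (ρ n₀) ((List.ofFn fun j : Fin (n₀ + (m + 1)) => ρ j.val).drop n₀)
                (ρ (n₀ + (m + 1))) = _
            rw [ofFn_drop]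
        rw [key] at hc
        exact hc
      have hψ' : psiPers Λ ρ' := psiPers_shift Λ ρ n₀ hψ
      obtain ⟨n, hn⟩ := hFwin (ρ n₀) haA ρ' hplay' hcomp' rfl hψ'
      exact ⟨n₀ + n, hn⟩
    · -- never visiting A: the play follows σ in the restricted game
      push_neg at hAcase
      have hcompσ : ∀ n, G.owner (ρ n) = 0 →
          ρ (n + 1) = σ (List.ofFn fun j : Fin n => ρ j.val) (ρ n) := by
        intro n hn
        have hc := hcomp n hn
        have hnone : firstA A (List.ofFn fun j : Fin n => ρ j.val) = none := by
          apply firstA_none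
          intro x hx
          rw [List.mem_ofFn] at hx
          obtain ⟨j, hj⟩ := hx
          rw [← hj]
          exact hAcase j.val
        unfold switchStrat at hc
        rw [hnone, if_neg (hAcase n)] at hc
        exact hc
      have hErest : ∀ n, ErestC G C (ρ n) (ρ (n + 1)) := by
        intro n
        by_cases hn : G.owner (ρ n) = 0
        · rw [hcompσ n hn]
          exact hσvalid _ _ hn
        · refine ⟨hplay n, Or.inr ?_⟩
          intro hsrcn
          exact hn (hsrc _ hsrcn)
      have hres := hσwin ρ hErest hcompσ hρ0
      rcases hres with ⟨n, hnA⟩ | hall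
      · exact absurd hnA (hAcase n)
      · -- contradiction with ψ_pers(S,C,R)
        exfalso
        have hpers := hψ (S, C, R) hmem 0 (by
          intro m2 _
          refine ⟨(hall m2).1, ?_⟩
          intro hsrcm
          rcases (hErest m2).2 with hC | hnC
          · exact hC
          · exact absurd hsrcm hnC)
        obtain ⟨m2, _, hR2⟩ := hpers
        exact (hall m2).2 hR2
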